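/- Let X = ∏_{t∈T} X_t be a product of sets with |X_t| > 1 for all t ∈ T and with T nonempty. Then there exists an S-open subset A of X with ∅ ≠ A ≠ X if and only if T is infinite. -/
import Mathlib

open Function Filter Topology

/-- `Sigma1 x` (σ₁(x)): the set of points differing from `x` in at most one coordinate. -/
def Sigma1 {T : Type*} {X : T → Type*} (x : ∀ t, X t) : Set (∀ t, X t) :=
  {y | {t | y t ≠ x t}.Subsingleton}

/-- A set `A` is `S`-open if `σ₁(x) ⊆ A` for every `x ∈ A`. -/
def SOpen {T : Type*} {X : T → Type*} (A : Set (∀ t, X t)) : Prop :=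
  ∀ x ∈ A, Sigma1 x ⊆ A

lemma sopen_step {T : Type*} [DecidableEq T] {X : T → Type*} {A : Set (∀ t, X t)}
    (hA : SOpen A) (s : Finset T) :
    ∀ x ∈ A, ∀ y : ∀ t, X t, {t | y t ≠ x t} ⊆ ↑s → y ∈ A := by
  induction s using Finset.induction_on with
  | empty =>
    intro x hx y hy
    have : y = x := funext fun t => by
      by_contra h; exact absurd (hy h) (by simp)
    exact this ▸ hx
  | @insert a s ha ih =>
    intro x hx y hy
    set z := Function.update y a (x a) with hz
    have hzA : z ∈ A := by
      apply ih x hx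
      intro t ht
      have htne : t ≠ a := by
        intro h; subst h; simp [hz, Function.update_self] at ht
      have hzy : z t = y t := Function.update_of_ne htne _ _
      rw [Set.mem_setOf_eq, hzy] at ht
      have := hy ht
      simp at this
      rcases this with h | h
      · exact absurd h htne
      · exact h
    apply hA z hzA
    intro t ht s' hs'
    simp only [Set.mem_setOf_eq] at ht hs'
    by_contra hts
    have h1 : t = a := by
      by_contra h; exact ht (Function.update_of_ne h _ _).symm
    have h2 : s' = a := by
      by_contra h; exact hs' (Function.update_of_ne h _ _).symm
    exact hts (h1.trans h2.symm)

/-- There is a nontrivial S-open subset of the product iff the index set is infinite. -/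
theorem exists_nontrivial_sOpen_iff_infinite {T : Type*} [Nonempty T] {X : T → Type*}
    (hnt : ∀ t, Nontrivial (X t)) :
    (∃ A : Set (∀ t, X t), SOpen A ∧ A ≠ ∅ ∧ A ≠ Set.univ) ↔ Infinite T := by
  classical
  constructor
  · rintro ⟨A, hA, hne, hnu⟩
    by_contra hfin
    have : Finite T := not_infinite_iff_finite.mp hfin
    haveI := Fintype.ofFinite T
    obtain ⟨x, hx⟩ := Set.nonempty_iff_ne_empty.mpr hne |>.imp (fun a ha => ha)
    apply hnu
    ext y
    simp only [Set.mem_univ, iff_true]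
    exact sopen_step hA (Finset.univ) x hx y (by simp)
  · intro hT
    have x₀ : ∀ t, X t := fun t => Classical.arbitrary (X t)
    refine ⟨{y | {t | y t ≠ x₀ t}.Finite}, ?_, ?_, ?_⟩
    · intro y hy z hz
      have : {t | z t ≠ x₀ t} ⊆ {t | z t ≠ y t} ∪ {t | y t ≠ x₀ t} := by
        intro t ht
        by_cases h : z t = y t
        · exact Or.inr (by simpa [h] using ht)
        · exact Or.inl h
      exact Set.Finite.subset ((Set.Finite.union (Set.Subsingleton.finite hz) hy)) this
    · intro h
      have : x₀ ∈ ({y | {t | y t ≠ x₀ t}.Finite} : Set _) := by simp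
      rw [h] at this; exact this
    · intro h
      choose y hy using fun t => exists_ne (x₀ t)
      have hy'' : y ∈ {y | {t | y t ≠ x₀ t}.Finite} := h.symm ▸ Set.mem_univ y
      have hy' : {t | y t ≠ x₀ t}.Finite := hy''
      have heq : {t | y t ≠ x₀ t} = Set.univ := Set.eq_univ_of_forall hy
      rw [heq] at hy'
      exact Set.infinite_univ hy'
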